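/- Let L be a complete lattice and C ⊆ L a chain (any two elements of C are comparable) consisting of strongly irreducible elements of L. Then the infimum ⨅ C is a strongly irreducible element of L. -/
import Mathlib

/-- An element `p` of a lattice is *strongly irreducible* if
`a ⊓ b ≤ p` implies `a ≤ p` or `b ≤ p` for all `a b`. -/
def StronglyIrreducible {α : Type*} [SemilatticeInf α] (p : α) : Prop :=
  ∀ a b : α, a ⊓ b ≤ p → a ≤ p ∨ b ≤ p

/-- The infimum of a chain of strongly irreducible elements of a complete lattice
is strongly irreducible. -/
theorem sInf_chain_stronglyIrreducible
    {α : Type*} [CompleteLattice α] (C : Set α)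
    (hchain : IsChain (· ≤ ·) C)
    (hirr : ∀ c ∈ C, StronglyIrreducible c) :
    StronglyIrreducible (sInf C) := by
  intro a b hab
  by_contra h
  push_neg at h
  obtain ⟨ha, hb⟩ := h
  rw [le_sInf_iff] at ha hb
  push_neg at ha hb
  obtain ⟨c, hcC, hac⟩ := ha
  obtain ⟨d, hdC, hbd⟩ := hb
  have hcd := hchain.total hcC hdC
  cases hcd with
  | inl hcd =>
    rcases hirr c hcC a b (hab.trans (sInf_le hcC)) with h | h
    · exact hac h
    · exact hbd (h.trans hcd)
  | inr hdc =>
    rcases hirr d hdC a b (hab.trans (sInf_le hdC)) with h | h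
    · exact hac (h.trans hdc)
    · exact hbd h
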